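/- If X is a c-well-filtered space, then for each countably filtered family C of nonempty saturated Lindelöf subsets of X, the intersection ⋂C is a nonempty saturated Lindelöf set. Consequently, the poset (LQ(X), ⊇) of saturated Lindelöf subsets ordered by reverse inclusion is countably directed complete. -/
import Mathlib


universe u

/-- A set is saturated if it equals the intersection of its open neighbourhoods. -/
def IsSaturatedSet {X : Type u} [TopologicalSpace X] (A : Set X) : Prop :=
  A = ⋂₀ {U : Set X | IsOpen U ∧ A ⊆ U}

/-- A family of sets is countably filtered (under `⊆`) if every countable subfamily
has a lower bound in the family. -/
def CntFilteredFam {X : Type u} (S : Set (Set X)) : Prop :=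
  ∀ T ⊆ S, T.Countable → ∃ L ∈ S, ∀ t ∈ T, L ⊆ t

/-- A family of sets is countably directed (under `⊆`) if every countable subfamily
has an upper bound in the family. -/
def CntDirectedFam {X : Type u} (S : Set (Set X)) : Prop :=
  ∀ T ⊆ S, T.Countable → ∃ U ∈ S, ∀ t ∈ T, t ⊆ U

/-- A space is c-well-filtered if for every countably filtered family of saturated
Lindelöf subsets whose intersection is contained in an open `U`, some member is contained in `U`. -/
def CWellFiltered (X : Type u) [TopologicalSpace X] : Prop :=
  ∀ S : Set (Set X), (∀ K ∈ S, IsSaturatedSet K ∧ IsLindelof K) →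
    CntFilteredFam S → ∀ U : Set X, IsOpen U → ⋂₀ S ⊆ U → ∃ K ∈ S, K ⊆ U

/-- A subset `D` is countably directed w.r.t. `le` if every countable subset of `D`
has an upper bound in `D`. -/
def CntDirected {α : Type u} (le : α → α → Prop) (D : Set α) : Prop :=
  ∀ E ⊆ D, E.Countable → ∃ d ∈ D, ∀ e ∈ E, le e d

/-- `a` is a least upper bound of `D` w.r.t. `le`. -/
def RIsLUB {α : Type u} (le : α → α → Prop) (D : Set α) (a : α) : Prop :=
  (∀ d ∈ D, le d a) ∧ ∀ b, (∀ d ∈ D, le d b) → le a b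

/-- Countably directed complete: every countably directed subset has a least upper bound. -/
def CDComplete {α : Type u} (le : α → α → Prop) : Prop :=
  ∀ D : Set α, CntDirected le D → ∃ a, RIsLUB le D a

/-- `x` is countably way-below `y`. -/
def CWayBelow {α : Type u} (le : α → α → Prop) (x y : α) : Prop :=
  ∀ D : Set α, CntDirected le D → ∀ a, RIsLUB le D a → le y a → ∃ d ∈ D, le x d

/-- `U` is σ-Scott open: an upper set meeting every countably directed set whose sup lies in `U`. -/
def SigmaScottOpenRel {α : Type u} (le : α → α → Prop) (U : Set α) : Prop :=
  (∀ x ∈ U, ∀ y, le x y → y ∈ U) ∧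
  ∀ D : Set α, CntDirected le D → ∀ a, RIsLUB le D a → a ∈ U → ∃ d ∈ D, d ∈ U

/-- `F` is countably filtered w.r.t. `le`: every countable subset has a lower bound in `F`. -/
def CntFilteredRel {α : Type u} (le : α → α → Prop) (F : Set α) : Prop :=
  ∀ E ⊆ F, E.Countable → ∃ l ∈ F, ∀ e ∈ E, le l e

/-- Countably approximating: countably directed complete and each `x` is the sup of
the countably directed set of elements countably way-below `x`. -/
def CntApprox {α : Type u} (le : α → α → Prop) : Prop :=
  CDComplete le ∧
    ∀ x, CntDirected le {y | CWayBelow le y x} ∧ RIsLUB le {y | CWayBelow le y x} x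

/-- `B` is a σ-basis: for each `x`, `B ∩ ⇓꜀x` is countably directed with sup `x`. -/
def IsSigmaBasis {α : Type u} (le : α → α → Prop) (B : Set α) : Prop :=
  ∀ x, CntDirected le (B ∩ {y | CWayBelow le y x}) ∧
    RIsLUB le (B ∩ {y | CWayBelow le y x}) x

/-- The saturated Lindelöf subsets of `X`. -/
def LQ (X : Type u) [TopologicalSpace X] : Type u :=
  {K : Set X // IsSaturatedSet K ∧ IsLindelof K}

/-- The order of `(LQ(X), ⊇)`: reverse inclusion. -/
def lqLe {X : Type u} [TopologicalSpace X] (A B : LQ X) : Prop := B.1 ⊆ A.1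

/-- in a c-well-filtered space, the intersection of a countably filtered
family of nonempty saturated Lindelöf sets is a nonempty saturated Lindelöf set; hence
`(LQ(X), ⊇)` is countably directed complete. -/
theorem stmt15 {X : Type u} [TopologicalSpace X] (h : CWellFiltered X) :
    (∀ S : Set (Set X), (∀ K ∈ S, IsSaturatedSet K ∧ IsLindelof K ∧ K.Nonempty) →
      CntFilteredFam S →
        (⋂₀ S).Nonempty ∧ IsSaturatedSet (⋂₀ S) ∧ IsLindelof (⋂₀ S)) ∧
    CDComplete (lqLe (X := X)) := by
  -- Auxiliary: intersection of a family of saturated sets is saturated.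
  have sat : ∀ S : Set (Set X), (∀ K ∈ S, IsSaturatedSet K) → IsSaturatedSet (⋂₀ S) := by
    intro S hS
    apply Set.Subset.antisymm
    · intro x hx U hU
      exact hU.2 hx
    · intro x hx K hK
      have hKsat := hS K hK
      rw [hKsat]
      intro U hU
      exact hx U ⟨hU.1, (Set.sInter_subset_of_mem hK).trans hU.2⟩
  -- Auxiliary: Lindelöfness of the intersection.
  have lin : ∀ S : Set (Set X), (∀ K ∈ S, IsSaturatedSet K ∧ IsLindelof K) →
      CntFilteredFam S → IsLindelof (⋂₀ S) := by
    intro S hS hF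
    rw [isLindelof_iff_countable_subcover]
    intro ι U hUo hcov
    obtain ⟨K, hKS, hKU⟩ := h S hS hF (⋃ i, U i) (isOpen_iUnion hUo) hcov
    obtain ⟨t, htc, htK⟩ := (hS K hKS).2.elim_countable_subcover U hUo hKU
    exact ⟨t, htc, (Set.sInter_subset_of_mem hKS).trans htK⟩
  constructor
  · intro S hS hF
    refine ⟨?_, sat S (fun K hK => (hS K hK).1), lin S (fun K hK => ⟨(hS K hK).1, (hS K hK).2.1⟩) hF⟩
    by_contra hne
    rw [Set.not_nonempty_iff_eq_empty] at hne
    obtain ⟨K, hKS, hKU⟩ := h S (fun K hK => ⟨(hS K hK).1, (hS K hK).2.1⟩) hF ∅ isOpen_empty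
      (by rw [hne])
    exact (hS K hKS).2.2.ne_empty (Set.subset_empty_iff.mp hKU)
  · intro D hD
    set S : Set (Set X) := Subtype.val '' D with hSdef
    have hSprop : ∀ K ∈ S, IsSaturatedSet K ∧ IsLindelof K := by
      rintro K ⟨d, _, rfl⟩; exact d.2
    have hSF : CntFilteredFam S := by
      intro T hTS hTc
      have hTc' : (Subtype.val ⁻¹' T ∩ D : Set (LQ X)).Countable := by
        apply (hTc.preimage Subtype.val_injective).mono
        exact Set.inter_subset_left
      obtain ⟨d, hdD, hdub⟩ := hD (Subtype.val ⁻¹' T ∩ D) Set.inter_subset_right hTc'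
      refine ⟨d.1, ⟨d, hdD, rfl⟩, ?_⟩
      intro t htT
      obtain ⟨e, heD, rfl⟩ := hTS htT
      exact hdub e ⟨htT, heD⟩
    have hA : IsSaturatedSet (⋂₀ S) ∧ IsLindelof (⋂₀ S) :=
      ⟨sat S (fun K hK => (hSprop K hK).1), lin S hSprop hSF⟩
    refine ⟨⟨⋂₀ S, hA⟩, ?_, ?_⟩
    · intro d hdD
      exact Set.sInter_subset_of_mem ⟨d, hdD, rfl⟩
    · intro b hb
      intro x hx
      rintro K ⟨d, hdD, rfl⟩
      exact hb d hdD hx
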